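/- Assume d*∘d ≠ I_H, S ≠ I_H, S ≠ −I_H, a ≠ b and a ≠ −b. Then the residual spectrum of U is empty: for every λ ∈ ℂ, if U − λ·I is injective then its range is dense in H. -/

import Mathlib

open ContinuousLinearMap
open scoped InnerProductSpace ComplexConjugate

/-- Under the standing assumptions (`d*∘d ≠ 1`, `S ≠ ±1`, `a ≠ ±b`),
the residual spectrum of `U` is empty: injectivity of `U − λ` implies dense range. -/
theorem stmt_5 {H K : Type*}
    [NormedAddCommGroup H] [InnerProductSpace ℂ H] [CompleteSpace H] [Nontrivial H]
    [NormedAddCommGroup K] [InnerProductSpace ℂ K] [CompleteSpace K] [Nontrivial K]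
    (a b : ℝ)
    (d : H →L[ℂ] K) (hd : d ∘L (adjoint d) = 1)
    (S : H →L[ℂ] H) (hS : IsSelfAdjoint S) (hS2 : S ∘L S = 1)
    (C : H →L[ℂ] H)
    (hC : C = (a : ℂ) • ((adjoint d) ∘L d) + (b : ℂ) • (1 - (adjoint d) ∘L d))
    (U : H →L[ℂ] H) (hU : U = S ∘L C)
    (h1 : (adjoint d) ∘L d ≠ 1) (h2 : S ≠ 1) (h3 : S ≠ -1)
    (h4 : a ≠ b) (h5 : a ≠ -b) :
    ∀ lam : ℂ, Function.Injective ⇑(U - lam • (1 : H →L[ℂ] H)) →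
      DenseRange ⇑(U - lam • (1 : H →L[ℂ] H)) := by
  intro lam hinj
  set P : H →L[ℂ] H := (adjoint d) ∘L d with hP
  -- basic pointwise facts
  have hdd : ∀ u : K, d (adjoint d u) = u := by
    intro u
    have := congrFun (congrArg DFunLike.coe hd) u
    simpa using this
  have hPP : ∀ x : H, P (P x) = P x := by
    intro x
    simp only [hP, comp_apply]
    rw [hdd]
  have hSS : ∀ x : H, S (S x) = x := by
    intro x
    have := congrFun (congrArg DFunLike.coe hS2) x
    simpa using this
  have hSinj : ∀ x : H, S x = 0 → x = 0 := by
    intro x hx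
    have := hSS x
    rw [hx, map_zero] at this
    exact this.symm
  have hPinnerL : ∀ x u : H, ⟪P x, u⟫_ℂ = ⟪d x, d u⟫_ℂ := by
    intro x u
    simp only [hP, comp_apply]
    exact adjoint_inner_left d u (d x)
  have hPinnerR : ∀ x u : H, ⟪x, P u⟫_ℂ = ⟪d x, d u⟫_ℂ := by
    intro x u
    simp only [hP, comp_apply]
    exact adjoint_inner_right d x (d u)
  have hCx : ∀ x : H, C x = (b : ℂ) • x + ((a : ℂ) - b) • P x := by
    intro x
    simp only [hC, hP, add_apply, coe_smul', Pi.smul_apply, sub_apply, one_apply_eq_self]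
    module
  have hSsym : ∀ x u : H, ⟪S x, u⟫_ℂ = ⟪x, S u⟫_ℂ := by
    intro x u
    nth_rewrite 1 [← hS.adjoint_eq]
    exact adjoint_inner_left S u x
  have hCsym : ∀ x u : H, ⟪C x, u⟫_ℂ = ⟪x, C u⟫_ℂ := by
    intro x u
    rw [hCx x, hCx u]
    simp only [inner_add_left, inner_add_right, inner_smul_left, inner_smul_right,
      hPinnerL, hPinnerR]
    rw [show (starRingEnd ℂ) ((b : ℂ)) = (b : ℂ) from Complex.conj_ofReal b,
      show (starRingEnd ℂ) ((a : ℂ) - b) = (a : ℂ) - b by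
        simp [map_sub, Complex.conj_ofReal]]
  -- reduce dense range to triviality of orthogonal complement
  set f : H →L[ℂ] H := U - lam • (1 : H →L[ℂ] H) with hf
  have key : ∀ y : H, (∀ x, ⟪f x, y⟫_ℂ = 0) → y = 0 := by
    intro y hy0
    by_contra hy
    -- C (S y) = conj lam • y
    have hCSy : C (S y) = conj lam • y := by
      have h0 : ∀ x : H, ⟪x, C (S y) - conj lam • y⟫_ℂ = 0 := by
        intro x
        have := hy0 x
        simp only [hf, sub_apply, coe_smul', Pi.smul_apply, one_apply_eq_self, hU, comp_apply,
          inner_sub_left, inner_smul_left] at this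
        rw [hSsym (C x) y, hCsym x (S y)] at this
        simp only [inner_sub_right, inner_smul_right]
        linear_combination this
      have := h0 (C (S y) - conj lam • y)
      rwa [inner_self_eq_zero, sub_eq_zero] at this
    set z : H := S y with hzdef
    have hz : z ≠ 0 := fun h => hy (hSinj y h)
    have hUz : U z = conj lam • z := by
      simp only [hU, comp_apply, hzdef, hSS]
      rw [show C (S y) = conj lam • y from hCSy, map_smul]
    have hCz : C z = conj lam • S z := by
      have := congrArg S hUz
      simp only [hU, comp_apply, hSS, map_smul] at this
      rw [this, hzdef, hSS]
    by_cases him : lam.im = 0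
    · -- real case: z is an eigenvector for lam itself
      have hcl : conj lam = lam := Complex.conj_eq_iff_im.mpr him
      have : f z = f 0 := by
        simp only [hf, sub_apply, coe_smul', Pi.smul_apply, one_apply_eq_self, map_zero,
          hUz, hcl, sub_self]
      exact hz (hinj this)
    -- non-real case
    have hlam0 : lam ≠ 0 := fun h => him (by simp [h])
    have hcl0 : conj lam ≠ 0 := by simpa using hlam0
    have hne : lam - conj lam ≠ 0 := by
      intro h
      apply him
      have h2 : lam = conj lam := by linear_combination h
      have h3 := congrArg Complex.im h2
      simp only [Complex.conj_im] at h3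
      linarith
    set N : ℝ := ‖z‖ ^ 2 with hN
    set D : ℝ := ‖d z‖ ^ 2 with hD
    have hNz : (N : ℂ) ≠ 0 := by
      simp only [hN]
      simpa [Complex.ofReal_pow, pow_eq_zero_iff] using hz
    have hiz : ⟪z, z⟫_ℂ = (N : ℂ) := by
      rw [inner_self_eq_norm_sq_to_K, hN]; norm_cast
    have hizP : ⟪z, P z⟫_ℂ = (D : ℂ) := by
      rw [hPinnerR, inner_self_eq_norm_sq_to_K, hD]; norm_cast
    have hizP' : ⟪P z, z⟫_ℂ = (D : ℂ) := by
      rw [hPinnerL, inner_self_eq_norm_sq_to_K, hD]; norm_cast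
    have hPzPz : ⟪P z, P z⟫_ℂ = (D : ℂ) := by
      rw [hPinnerL ]
      rw [show d (P z) = d z by simp only [hP, comp_apply]; rw [hdd]]
      rw [inner_self_eq_norm_sq_to_K, hD]; norm_cast
    -- r = <z, Sz> is real, s = <z, Cz> is real, s = conj lam * r  =>  r = s = 0
    set r : ℂ := ⟪z, S z⟫_ℂ with hr
    set s : ℂ := ⟪z, C z⟫_ℂ with hs
    have hr_real : conj r = r := by
      rw [hr, inner_conj_symm, hSsym]
    have hs_real : conj s = s := by
      rw [hs, inner_conj_symm, hCsym]
    have hsr : s = conj lam * r := by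
      rw [hs, hCz, inner_smul_right]
    have hr0 : r = 0 := by
      have h2 : lam * r = conj lam * r := by
        calc lam * r = conj (conj lam * r) := by rw [map_mul, Complex.conj_conj, hr_real]
          _ = conj s := by rw [hsr]
          _ = s := hs_real
          _ = conj lam * r := hsr
      have h3 : (lam - conj lam) * r = 0 := by linear_combination h2
      exact (mul_eq_zero.mp h3).resolve_left hne
    have hs0 : s = 0 := by rw [hsr, hr0, mul_zero]
    -- the two scalar equations
    have hsval : (b : ℂ) * N + ((a : ℂ) - b) * D = 0 := by
      have : s = (b : ℂ) * N + ((a : ℂ) - b) * D := by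
        rw [hs, hCx z, inner_add_right, inner_smul_right, inner_smul_right, hiz, hizP]
      rw [← this, hs0]
    have htval : lam * conj lam * N = (b : ℂ) ^ 2 * N + ((a : ℂ) ^ 2 - (b : ℂ) ^ 2) * D := by
      have hl : ⟪C z, C z⟫_ℂ = lam * conj lam * N := by
        rw [hCz, inner_smul_left, inner_smul_right, Complex.conj_conj]
        rw [show ⟪S z, S z⟫_ℂ = ⟪z, z⟫_ℂ by rw [hSsym, hSS], hiz]
        ring
      have hrr : ⟪C z, C z⟫_ℂ = (b : ℂ) ^ 2 * N + ((a : ℂ) ^ 2 - (b : ℂ) ^ 2) * D := by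
        rw [hCx z]
        simp only [inner_add_left, inner_add_right, inner_smul_left, inner_smul_right,
          hiz, hizP, hizP', hPzPz]
        rw [show (starRingEnd ℂ) ((b : ℂ)) = (b : ℂ) from Complex.conj_ofReal b,
          show (starRingEnd ℂ) ((a : ℂ) - b) = (a : ℂ) - b by
            simp [map_sub, Complex.conj_ofReal]]
        ring
      rw [← hl, hrr]
    have hmod : lam * conj lam = -((a : ℂ) * b) := by
      apply mul_right_cancel₀ hNz
      linear_combination htval + ((a : ℂ) + b) * hsval
    -- build the eigenvector w for lam
    obtain ⟨c, hc⟩ : ∃ c : ℂ, c = ((a : ℂ) + b) * conj lam / (lam - conj lam) := ⟨_, rfl⟩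
    have hab : (a : ℂ) + b ≠ 0 := by
      intro h
      apply h5
      have : (a : ℂ) = (-b : ℝ) := by push_cast; linear_combination h
      exact_mod_cast this
    have hc0 : c ≠ 0 := by
      rw [hc]
      exact div_ne_zero (mul_ne_zero hab hcl0) hne
    have hPCz : P (C z) = (a : ℂ) • P z := by
      rw [hCx z, map_add, map_smul, map_smul, hPP]
      module
    have hCCz : C (C z) = ((a : ℂ) + b) • C z - ((a : ℂ) * b) • z := by
      rw [hCx (C z), hPCz]
      have habz : ((a : ℂ) - b) • P z = C z - (b : ℂ) • z := by
        rw [hCx z]; module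
      calc (b : ℂ) • C z + ((a : ℂ) - b) • ((a:ℂ) • P z)
          = (b : ℂ) • C z + (a : ℂ) • (((a : ℂ) - b) • P z) := by module
        _ = (b : ℂ) • C z + (a : ℂ) • (C z - (b : ℂ) • z) := by rw [habz]
        _ = ((a : ℂ) + b) • C z - ((a : ℂ) * b) • z := by module
    have hSz : S z = (conj lam)⁻¹ • C z := by
      rw [hCz]
      rw [smul_smul, inv_mul_cancel₀ hcl0, one_smul]
    have hSCz : S (C z) = conj lam • z := by
      have := hUz
      rwa [hU, comp_apply] at this
    have hweig : U (C z + c • z) = lam • (C z + c • z) := by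
      rw [hU, comp_apply, map_add, map_smul, hCCz]
      rw [show ((a : ℂ) + b) • C z - ((a : ℂ) * b) • z + c • C z
          = (((a : ℂ) + b) + c) • C z - ((a : ℂ) * b) • z from by module]
      rw [map_sub, map_smul, map_smul, hSCz, hSz]
      have e1 : (a : ℂ) * b * (conj lam)⁻¹ = -lam := by
        rw [mul_inv_eq_iff_eq_mul₀ hcl0]
        linear_combination hmod
      have e2 : (((a : ℂ) + b) + c) * conj lam = lam * c := by
        rw [hc]
        field_simp
        try ring
      rw [smul_smul, smul_smul, e1, e2]
      module
    have hw0 : C z + c • z = 0 := by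
      apply hinj
      simp only [hf, sub_apply, coe_smul', Pi.smul_apply, one_apply_eq_self, map_zero, hweig, sub_self]
    have : s = -c * N := by
      have hCzval : C z = -c • z := by
        have := hw0
        rw [add_eq_zero_iff_eq_neg] at this
        rw [this]; module
      rw [hs, hCzval, inner_smul_right, hiz]
      try ring
    rw [hs0] at this
    rcases mul_eq_zero.mp this.symm with h | h
    · exact hc0 (neg_eq_zero.mp h)
    · exact hNz h
  have h1' : (LinearMap.range (f : H →ₗ[ℂ] H))ᗮ = ⊥ := by
    rw [Submodule.eq_bot_iff]
    intro y hy
    exact key y fun x => hy (f x) ⟨x, rfl⟩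
  have h2' := (Submodule.topologicalClosure_eq_top_iff (K := LinearMap.range (f : H →ₗ[ℂ] H))).2 h1'
  have h3' := Submodule.dense_iff_topologicalClosure_eq_top.2 h2'
  simpa [DenseRange, LinearMap.coe_range] using h3'
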